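/- Let I be a fractional ideal of O, let ν, λ ∈ ℤ^p with t^ν·O~ ⊆ I ⊆ t^λ·O~, and set 𝒱 = {v ∈ ℤ^p : Δ(γ − v − 1, val(I)) = ∅} and n₀ = Σ_{i=1}^p (ν_i − λ_i). Let (α^{(j)})_{0 ≤ j ≤ n₀} be any sequence in ℤ^p with α^{(0)} = γ − ν, α^{(n₀)} = γ − λ, and for each j ∈ {0,…,n₀−1} some i(j) ∈ {1,…,p} with α^{(j+1)} = α^{(j)} + e_{i(j)}. Setting ℓ' = Card{ j ∈ {0,…,n₀−1} : Λ_{i(j)}(α^{(j)}, 𝒱) ≠ ∅ }, one has dim_ℂ(I / t^ν·O~) ≤ Σ_{i=1}^p (ν_i − λ_i) − ℓ'. -/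

import Mathlib

open scoped Classical

set_option synthInstance.maxHeartbeats 1000000
set_option maxHeartbeats 1000000

noncomputable section

/-- `K`, the total ring of fractions: the product of `p` copies of the field of
formal Laurent series over `ℂ`. -/
abbrev KK (p : ℕ) : Type := Fin p → LaurentSeries ℂ

lemma algebraMap_component {p : ℕ} (c : ℂ) (i : Fin p) :
    algebraMap ℂ (KK p) c i = HahnSeries.single (0:ℤ) c := by
  rw [Pi.algebraMap_apply, HahnSeries.algebraMap_apply', PowerSeries.algebraMap_apply,
      Algebra.algebraMap_self_apply, HahnSeries.ofPowerSeries_C, HahnSeries.C_apply]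

lemma smul_eq_algebraMap_mul {p : ℕ} (c : ℂ) (x : KK p) :
    c • x = algebraMap ℂ (KK p) c * x := by
  funext i
  rw [Pi.smul_apply, Pi.mul_apply, algebraMap_component,
      HahnSeries.single_zero_mul_eq_smul]

/-- The `t`-adic order of a Laurent series, with `⊤` for the zero series. -/
def valC (g : LaurentSeries ℂ) : WithTop ℤ :=
  if g = 0 then ⊤ else (g.order : WithTop ℤ)

/-- The value vector `val(g) = (val_1 g, …, val_p g)`. -/
def valVec {p : ℕ} (g : KK p) : Fin p → WithTop ℤ := fun i => valC (g i)

/-- The set `t^α·O~` of tuples of Laurent series whose `i`-th component has all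
coefficients in degrees below `α i` equal to zero (equivalently, whose `i`-th
component has `t`-adic order at least `α i`), as a `ℂ`-submodule of `K`.
For `α = 0` this is `O~` itself. -/
def stdMod (p : ℕ) (α : Fin p → ℤ) : Submodule ℂ (KK p) where
  carrier := {g | ∀ i, ∀ j : ℤ, j < α i → (g i).coeff j = 0}
  add_mem' := by
    intro a b ha hb i j hj
    simp [HahnSeries.coeff_add, ha i j hj, hb i j hj]
  zero_mem' := by
    intro i j hj
    simp
  smul_mem' := by
    intro c a ha i j hj
    simp [HahnSeries.coeff_smul, ha i j hj]

/-- The dual `S^∨ = {h ∈ K : h·S ⊆ O}` of a subset `S ⊆ K`, as a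
`ℂ`-submodule of `K`. -/
def dualMod {p : ℕ} (O : Subalgebra ℂ (KK p)) (S : Set (KK p)) :
    Submodule ℂ (KK p) where
  carrier := {h | ∀ g ∈ S, h * g ∈ O}
  add_mem' := by
    intro a b ha hb g hg
    simpa [add_mul] using add_mem (ha g hg) (hb g hg)
  zero_mem' := by
    intro g hg
    simpa using O.zero_mem
  smul_mem' := by
    intro c a ha g hg
    rw [smul_eq_algebraMap_mul, mul_assoc]
    exact O.mul_mem (O.algebraMap_mem c) (ha g hg)

/-- `val(S)`: values of the non-zerodivisors of `K` (elements all of whose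
components are nonzero) belonging to `S`. -/
def vals {p : ℕ} (S : Set (KK p)) : Set (Fin p → ℤ) :=
  {v | ∃ g ∈ S, ∀ i, valC (g i) = (v i : WithTop ℤ)}

/-- `valbar(S)`: values of all elements of `S`. -/
def valsBar {p : ℕ} (S : Set (KK p)) : Set (Fin p → WithTop ℤ) :=
  {v | ∃ g ∈ S, ∀ i, valC (g i) = v i}

/-- `I` is a fractional ideal of `O`: an `O`-stable `ℂ`-submodule of `K` which
is finitely generated over `O` and contains a non-zerodivisor of `K`. -/
def IsFracIdeal {p : ℕ} (O : Subalgebra ℂ (KK p)) (I : Submodule ℂ (KK p)) : Prop :=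
  (∀ a ∈ O, ∀ x ∈ I, a * x ∈ I) ∧
  (∃ s : Finset (KK p), (↑s : Set (KK p)) ⊆ (I : Set (KK p)) ∧
    ∀ x ∈ I, ∃ a : KK p → KK p, (∀ g ∈ s, a g ∈ O) ∧ x = ∑ g ∈ s, a g * g) ∧
  (∃ g ∈ I, ∀ i, g i ≠ 0)

/-- `Δ_i(v, M)`. -/
def DeltaI {p : ℕ} (i : Fin p) (v : Fin p → ℤ) (M : Set (Fin p → ℤ)) :
    Set (Fin p → ℤ) :=
  {α ∈ M | α i = v i ∧ ∀ j, j ≠ i → v j < α j}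

/-- `Δ(v, M) = ⋃ i, Δ_i(v, M)`. -/
def DeltaSet {p : ℕ} (v : Fin p → ℤ) (M : Set (Fin p → ℤ)) : Set (Fin p → ℤ) :=
  ⋃ i : Fin p, DeltaI i v M

/-- `Λ_i(v, M)`. -/
def LamSet {p : ℕ} (i : Fin p) (v : Fin p → ℤ) (M : Set (Fin p → ℤ)) :
    Set (Fin p → ℤ) :=
  {α ∈ M | α i = v i ∧ v ≤ α}

/-- `dim_ℂ (B / A)`: the dimension of the image of `B` in `K ⧸ A`
(which is canonically `B/(A ∩ B)`). -/
def qdim {p : ℕ} (A B : Submodule ℂ (KK p)) : ℕ :=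
  Module.finrank ℂ ↥(B.map A.mkQ)

/-- `c_I(v) = dim_ℂ (I_v / I_{v+1})`, where `I_v = {g ∈ I : val g ≥ v}`. -/
def cI {p : ℕ} (I : Submodule ℂ (KK p)) (v : Fin p → ℤ) : ℕ :=
  qdim (I ⊓ stdMod p (v + 1)) (I ⊓ stdMod p v)

/-- `α_I(v) = Σ_{J ⊆ {1,…,p}} (−1)^{p−|J|} c_I(v − e_J)`. -/
def alphaI {p : ℕ} (I : Submodule ℂ (KK p)) (v : Fin p → ℤ) : ℤ :=
  ∑ J : Finset (Fin p),
    (-1 : ℤ) ^ (p - J.card) * cI I (fun j => v j - if j ∈ J then 1 else 0)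

/-- `O` itself, as a `ℂ`-submodule of `K`. -/
def algSubmodule {p : ℕ} (O : Subalgebra ℂ (KK p)) : Submodule ℂ (KK p) where
  carrier := O
  add_mem' := fun ha hb => O.add_mem ha hb
  zero_mem' := O.zero_mem
  smul_mem' := fun c x hx => by
    rw [smul_eq_algebraMap_mul]
    exact O.mul_mem (O.algebraMap_mem c) hx

lemma mem_stdMod {p : ℕ} {a : Fin p → ℤ} {g : KK p} :
    g ∈ stdMod p a ↔ ∀ i, ∀ j : ℤ, j < a i → (g i).coeff j = 0 := Iff.rfl

lemma order_eq_of_aux (x : LaurentSeries ℂ) (m : ℤ) (h0 : x.coeff m ≠ 0)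
    (hlt : ∀ j : ℤ, j < m → x.coeff j = 0) : x.order = m := by
  have hx : x ≠ 0 := fun h => h0 (by simp [h])
  refine le_antisymm (HahnSeries.order_le_of_coeff_ne_zero h0) ?_
  by_contra h
  push_neg at h
  exact (HahnSeries.coeff_order_eq_zero.not.mpr hx) (hlt _ h)

/-- The coefficient-extraction linear map. -/
def coeffMap {p : ℕ} (k : Fin p) (m : ℤ) : KK p →ₗ[ℂ] ℂ where
  toFun g := (g k).coeff m
  map_add' a b := by simp [HahnSeries.coeff_add]
  map_smul' c a := by simp [HahnSeries.coeff_smul]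

/-- Key inequality: `dim_ℂ (I / t^ν·O~) ≤ Σ (ν_i − λ_i) − ℓ'`. -/
theorem dim_le_sum_sub_ellprime {p : ℕ} (hp : 1 ≤ p) (O : Subalgebra ℂ (KK p))
    (hO : (O : Set (KK p)) ⊆ (stdMod p 0 : Set (KK p)))
    (γ : Fin p → ℕ)
    (hγ : dualMod O (stdMod p 0 : Set (KK p)) = stdMod p (fun i => (γ i : ℤ)))
    (I : Submodule ℂ (KK p)) (hI : IsFracIdeal O I)
    (ν lam : Fin p → ℤ)
    (hν : (stdMod p ν : Set (KK p)) ⊆ (I : Set (KK p)))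
    (hlam : (I : Set (KK p)) ⊆ (stdMod p lam : Set (KK p)))
    (n0 : ℕ) (hn0 : (n0 : ℤ) = ∑ i, (ν i - lam i))
    (α : ℕ → Fin p → ℤ) (ii : ℕ → Fin p)
    (hα0 : α 0 = fun i => (γ i : ℤ) - ν i)
    (hαlast : α n0 = fun i => (γ i : ℤ) - lam i)
    (hstep : ∀ j < n0, α (j + 1) = α j + Pi.single (ii j) 1) :
    (qdim (stdMod p ν) I : ℤ) ≤
      (∑ i, (ν i - lam i)) -
        (((Finset.range n0).filter
          (fun j => (LamSet (ii j) (α j)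
            {v : Fin p → ℤ |
              DeltaSet (fun k => (γ k : ℤ) - v k - 1)
                (vals (I : Set (KK p))) = ∅}).Nonempty)).card : ℤ) := by
  classical
  set 𝒱 : Set (Fin p → ℤ) :=
    {v : Fin p → ℤ |
      DeltaSet (fun k => (γ k : ℤ) - v k - 1) (vals (I : Set (KK p))) = ∅} with h𝒱
  set cond : ℕ → Prop := fun j => (LamSet (ii j) (α j) 𝒱).Nonempty with hcond
  set D : ℕ → ℤ := fun j => (γ (ii j) : ℤ) - α (j + 1) (ii j) with hD
  have hstep' : ∀ j, j < n0 → ∀ k,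
      α (j + 1) k = α j k + (Pi.single (ii j) 1 : Fin p → ℤ) k := by
    intro j hj k
    rw [hstep j hj]; rfl
  have hsingle_nonneg : ∀ (b : ℕ) (k : Fin p),
      (0 : ℤ) ≤ (Pi.single (ii b) 1 : Fin p → ℤ) k := by
    intro b k
    rcases eq_or_ne k (ii b) with h | h
    · subst h; rw [Pi.single_eq_same]; norm_num
    · rw [Pi.single_eq_of_ne h]
  -- monotonicity of the path
  have hmono : ∀ a b : ℕ, a ≤ b → b ≤ n0 → ∀ k, α a k ≤ α b k := by
    intro a b hab
    induction b, hab using Nat.le_induction with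
    | base => intro _ k; exact le_rfl
    | succ b hab ih =>
      intro hb k
      have hb' : b < n0 := hb
      have h1 := ih (le_of_lt hb') k
      have h2 := hstep' b hb' k
      have h3 := hsingle_nonneg b k
      omega
  -- discrete intermediate value: the path hits every intermediate level
  have hhit : ∀ (k : Fin p) (c : ℤ) (a b : ℕ), a ≤ b → b ≤ n0 →
      α a k < c → c ≤ α b k →
      ∃ j', a ≤ j' ∧ j' < b ∧ ii j' = k ∧ α (j' + 1) k = c := by
    intro k c a b hab
    induction b, hab using Nat.le_induction with
    | base => intro _ h1 h2; omega
    | succ b hab ih =>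
      intro hb h1 h2
      have hb' : b < n0 := hb
      by_cases hc : c ≤ α b k
      · obtain ⟨j', hj1, hj2, hj3, hj4⟩ := ih (le_of_lt hb') h1 hc
        exact ⟨j', hj1, Nat.lt_succ_of_lt hj2, hj3, hj4⟩
      · push_neg at hc
        have hs := hstep' b hb' k
        have hk : ii b = k := by
          by_contra hne
          rw [Pi.single_eq_of_ne (Ne.symm hne)] at hs
          omega
        rw [hk, Pi.single_eq_same] at hs
        exact ⟨b, hab, Nat.lt_succ_self b, hk, by omega⟩
  -- membership in stdMod (γ - α a) from vanishing of later step coefficients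
  have hmem : ∀ a : ℕ, a ≤ n0 → ∀ g, g ∈ I →
      (∀ j', a ≤ j' → j' < n0 → (g (ii j')).coeff (D j') = 0) →
      ∀ (k : Fin p) (m : ℤ), m < (γ k : ℤ) - α a k → (g k).coeff m = 0 := by
    intro a ha g hgI hvan k m hm
    by_cases hml : m < lam k
    · exact hlam hgI k m hml
    · push_neg at hml
      have hlast : α n0 k = (γ k : ℤ) - lam k := congrFun hαlast k
      obtain ⟨j', hj1, hj2, hj3, hj4⟩ :=
        hhit k ((γ k : ℤ) - m) a n0 ha le_rfl (by omega) (by rw [hlast]; omega)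
      have hDj : D j' = m := by
        simp only [hD]
        rw [hj3]
        omega
      have hv := hvan j' hj1 hj2
      rw [hj3, hDj] at hv
      exact hv
  -- key step: at a "good" step the coefficient vanishes automatically
  have hkey : ∀ j, j < n0 → cond j → ∀ g, g ∈ I →
      (∀ (k : Fin p) (m : ℤ), m < (γ k : ℤ) - α (j + 1) k → (g k).coeff m = 0) →
      (g (ii j)).coeff (D j) = 0 := by
    intro j hj hc g hgI hgstd
    by_contra hne
    obtain ⟨v, hv⟩ := hc
    obtain ⟨hv𝒱, hvi, hvge⟩ := hv
    set i := ii j with hi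
    set w : Fin p → ℤ := fun k => (γ k : ℤ) - v k - 1 with hw
    have hstepj := hstep' j hj i
    rw [← hi, Pi.single_eq_same] at hstepj
    have hwi : w i = D j := by
      simp only [hw, hD, ← hi]
      omega
    have hgi0 : g i ≠ 0 := fun h => hne (by rw [h]; simp)
    have hordgi : (g i).order = D j := by
      refine order_eq_of_aux _ _ hne fun m hm => hgstd i m ?_
      simp only [hD, ← hi] at hm
      omega
    -- the perturbation
    set N : Fin p → ℤ := fun k =>
      if g k = 0 then max (ν k) (w k + 1) else max (ν k) ((g k).order + 1) with hN
    set h : KK p := fun k => HahnSeries.single (N k) (1 : ℂ) with hh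
    have hNν : ∀ k, ν k ≤ N k := by
      intro k
      simp only [hN]
      split <;> exact le_max_left _ _
    have hhstd : h ∈ stdMod p ν := by
      rw [mem_stdMod]
      intro k m hmk
      have : h k = HahnSeries.single (N k) (1 : ℂ) := rfl
      rw [this]
      exact HahnSeries.coeff_single_of_ne (by have := hNν k; omega)
    have hhI : h ∈ I := hν hhstd
    have hghI : g + h ∈ I := I.add_mem hgI hhI
    set u : Fin p → ℤ := fun k => if g k = 0 then N k else (g k).order with hu
    have hcomp : ∀ k, (g + h) k ≠ 0 ∧ ((g + h) k).order = u k := by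
      intro k
      by_cases hk : g k = 0
      · have heq : (g + h) k = HahnSeries.single (N k) (1 : ℂ) := by
          show g k + h k = _
          rw [hk, zero_add]
        constructor
        · rw [heq]; exact HahnSeries.single_ne_zero one_ne_zero
        · rw [heq, HahnSeries.order_single one_ne_zero]
          simp only [hu, hk, if_pos]
      · have hNk : (g k).order < N k := by
          have : N k = max (ν k) ((g k).order + 1) := by simp only [hN, hk, if_neg, if_false]
          rw [this]
          have := le_max_right (ν k) ((g k).order + 1)
          omega
        have hco : ((g + h) k).coeff ((g k).order) ≠ 0 := by
          have heq : (g + h) k = g k + HahnSeries.single (N k) (1 : ℂ) := rfl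
          rw [heq, HahnSeries.coeff_add,
            HahnSeries.coeff_single_of_ne (by omega : (g k).order ≠ N k), add_zero]
          exact (HahnSeries.coeff_order_eq_zero.not.mpr hk)
        have hne0 : (g + h) k ≠ 0 := fun h0 => hco (by rw [h0]; simp)
        refine ⟨hne0, ?_⟩
        have hueq : u k = (g k).order := by simp only [hu, hk, if_neg, if_false]
        rw [hueq]
        refine order_eq_of_aux _ _ hco fun m hm => ?_
        have heq : (g + h) k = g k + HahnSeries.single (N k) (1 : ℂ) := rfl
        rw [heq, HahnSeries.coeff_add, HahnSeries.coeff_eq_zero_of_lt_order hm,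
          HahnSeries.coeff_single_of_ne (by omega : m ≠ N k), add_zero]
    have hu_vals : u ∈ vals (I : Set (KK p)) := by
      refine ⟨g + h, hghI, fun k => ?_⟩
      unfold valC
      rw [if_neg (hcomp k).1, (hcomp k).2]
    have hui : u i = w i := by
      have : u i = (g i).order := by simp only [hu, hgi0, if_neg, if_false]
      rw [this, hordgi, hwi]
    have hugt : ∀ k, k ≠ i → w k < u k := by
      intro k hk
      by_cases hgk : g k = 0
      · have h1 : u k = N k := by simp only [hu, hgk, if_pos]
        have h2 : N k = max (ν k) (w k + 1) := by simp only [hN, hgk, if_pos]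
        have := le_max_right (ν k) (w k + 1)
        omega
      · have h1 : u k = (g k).order := by simp only [hu, hgk, if_neg, if_false]
        have hord : (γ k : ℤ) - α (j + 1) k ≤ (g k).order := by
          by_contra hlt
          push_neg at hlt
          exact (HahnSeries.coeff_order_eq_zero.not.mpr hgk) (hgstd k _ hlt)
        have hαeq : α (j + 1) k = α j k := by
          have hs := hstep' j hj k
          have hki : k ≠ ii j := fun hkk => hk (by rw [hi]; exact hkk)
          rw [Pi.single_eq_of_ne hki] at hs
          omega
        have hvk : α j k ≤ v k := hvge k
        have hwk : w k = (γ k : ℤ) - v k - 1 := rfl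
        omega
    have humem : u ∈ DeltaSet w (vals (I : Set (KK p))) :=
      Set.mem_iUnion.mpr ⟨i, hu_vals, hui, hugt⟩
    have hempty : DeltaSet w (vals (I : Set (KK p))) = ∅ := hv𝒱
    rw [hempty] at humem
    exact humem
  -- all step coefficients vanish given vanishing on the "bad" steps
  have hvanall : ∀ g, g ∈ I →
      (∀ j, j < n0 → ¬ cond j → (g (ii j)).coeff (D j) = 0) →
      ∀ n : ℕ, ∀ j, j < n0 → n0 ≤ j + n → (g (ii j)).coeff (D j) = 0 := by
    intro g hgI hT n
    induction n with
    | zero => intro j h1 h2; omega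
    | succ n ih =>
      intro j h1 h2
      by_cases hn : n0 ≤ j + n
      · exact ih j h1 hn
      · by_cases hcj : cond j
        · exact hkey j h1 hcj g hgI
            (hmem (j + 1) (by omega) g hgI fun j' ha hb => ih j' hb (by omega))
        · exact hT j h1 hcj
  -- hence such g lie in stdMod ν
  have hfull : ∀ g, g ∈ I →
      (∀ j, j < n0 → ¬ cond j → (g (ii j)).coeff (D j) = 0) →
      g ∈ stdMod p ν := by
    intro g hgI hT
    rw [mem_stdMod]
    intro k m hm
    have h0 : α 0 k = (γ k : ℤ) - ν k := congrFun hα0 k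
    exact hmem 0 (Nat.zero_le _) g hgI
      (fun j' _ hb => hvanall g hgI hT n0 j' hb (by omega)) k m (by rw [h0]; omega)
  -- the step degrees lie below ν
  have hDlt : ∀ j, j < n0 → D j < ν (ii j) := by
    intro j hj
    have h0 : α 0 (ii j) = (γ (ii j) : ℤ) - ν (ii j) := congrFun hα0 (ii j)
    have hm := hmono 0 j (Nat.zero_le _) (le_of_lt hj) (ii j)
    have hs := hstep' j hj (ii j)
    rw [Pi.single_eq_same] at hs
    simp only [hD]
    omega
  -- linear algebra: inject I / stdMod ν into functions on the bad steps
  set T : Finset ℕ := (Finset.range n0).filter (fun j => ¬ cond j) with hT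
  set Ψ : KK p →ₗ[ℂ] ({j // j ∈ T} → ℂ) :=
    LinearMap.pi (fun j => coeffMap (ii j.1) (D j.1)) with hΨ
  have hTlt : ∀ j : {j // j ∈ T}, j.1 < n0 := by
    intro j
    have := (Finset.mem_filter.mp j.2).1
    exact Finset.mem_range.mp this
  have hker : stdMod p ν ≤ LinearMap.ker Ψ := by
    intro g hg
    rw [LinearMap.mem_ker]
    funext j
    have : Ψ g j = (g (ii j.1)).coeff (D j.1) := rfl
    rw [this]
    exact hg (ii j.1) (D j.1) (hDlt j.1 (hTlt j))
  set Ψ' := Submodule.liftQ (stdMod p ν) Ψ hker with hΨ'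
  set Nmod := I.map (stdMod p ν).mkQ with hNmod
  set f : ↥Nmod →ₗ[ℂ] ({j // j ∈ T} → ℂ) := Ψ'.comp Nmod.subtype with hf
  have hinj : ∀ x : ↥Nmod, f x = 0 → x = 0 := by
    rintro ⟨x, hx⟩ hfx
    obtain ⟨g, hgI, rfl⟩ := Submodule.mem_map.mp hx
    have hΨg : Ψ g = 0 := by
      have heq : f ⟨(stdMod p ν).mkQ g, hx⟩ = Ψ' ((stdMod p ν).mkQ g) := rfl
      rw [heq] at hfx
      rwa [Submodule.mkQ_apply, Submodule.liftQ_apply] at hfx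
    have hgstd : g ∈ stdMod p ν := by
      refine hfull g hgI fun j hj hnc => ?_
      have hjT : j ∈ T := Finset.mem_filter.mpr ⟨Finset.mem_range.mpr hj, hnc⟩
      exact congrFun hΨg ⟨j, hjT⟩
    refine Subtype.ext ?_
    show (stdMod p ν).mkQ g = 0
    rw [Submodule.mkQ_apply, Submodule.Quotient.mk_eq_zero]
    exact hgstd
  have hinjf : Function.Injective f :=
    LinearMap.ker_eq_bot.mp (LinearMap.ker_eq_bot'.mpr hinj)
  have hfin : Module.finrank ℂ ↥Nmod ≤ T.card := by
    have h1 := LinearMap.finrank_le_finrank_of_injective hinjf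
    rwa [Module.finrank_fintype_fun_eq_card, Fintype.card_coe] at h1
  -- conclude
  have hcards : ((Finset.range n0).filter cond).card + T.card = n0 := by
    rw [hT, Finset.card_filter_add_card_filter_not, Finset.card_range]
  have hqdim : qdim (stdMod p ν) I = Module.finrank ℂ ↥Nmod := rfl
  rw [← hn0]
  have hle : (qdim (stdMod p ν) I : ℤ) ≤ (T.card : ℤ) := by
    rw [hqdim]; exact_mod_cast hfin
  have hcards2 : (((Finset.range n0).filter cond).card : ℤ) + (T.card : ℤ) = (n0 : ℤ) := by
    exact_mod_cast hcards
  have hfinal : ∀ X : Finset ℕ, X = (Finset.range n0).filter cond →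
      (qdim (stdMod p ν) I : ℤ) ≤ (n0 : ℤ) - (X.card : ℤ) := by
    rintro X rfl
    omega
  exact hfinal _ (Finset.filter_congr_decidable _ _ _)
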